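/- Let λ : [0,∞) → [0,∞) be locally integrable, h bounded measurable, and Γ : [0,∞) → [0,∞) continuous, strictly increasing, Γ(0)=0, with left-hand derivative Γ'(s) = g(Γ(s)) for a strictly positive left-continuous g. Then ∫₀^{Γ(t)} h(s) λ(s) ds = ∫₀ᵗ h(Γ(s)) λ(Γ(s)) g(Γ(s)) ds for all t ≥ 0. -/

import Mathlib

open MeasureTheory intervalIntegral Set

open Filter Topology in
open scoped NNReal ENNReal in
/-- Change of variables for the intensity integral under the time change `Γ` with
left-hand derivative `Γ'(s) = g(Γ(s))`:
`∫₀^{Γ(t)} h(s) λ(s) ds = ∫₀ᵗ h(Γ(s)) λ(Γ(s)) g(Γ(s)) ds`. -/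
theorem stmt5 (lam h g : ℝ → ℝ) (Γ : ℝ → ℝ)
    (hlam_nonneg : ∀ s, 0 ≤ lam s)
    (hlam_loc : LocallyIntegrable lam volume)
    (hh_bdd : ∃ C, ∀ s, |h s| ≤ C)
    (hh_meas : Measurable h)
    (hg_pos : ∀ s, 0 ≤ s → 0 < g s)
    (hg_left : ∀ s, 0 < s → ContinuousWithinAt g (Set.Iic s) s)
    (hΓ_cont : Continuous Γ)
    (hΓ_mono : StrictMono Γ)
    (hΓ0 : Γ 0 = 0)
    (hΓ_deriv : ∀ s, 0 < s → HasDerivWithinAt Γ (g (Γ s)) (Set.Iio s) s) :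
    ∀ t, 0 ≤ t →
      ∫ s in (0:ℝ)..(Γ t), h s * lam s
        = ∫ s in (0:ℝ)..t, h (Γ s) * lam (Γ s) * g (Γ s) := by
  -- the time-shifted intensity, cut off at nonpositive times
  set G : ℝ → ℝ := fun s => if 0 < s then g (Γ s) else 0 with hG_def
  -- difference quotients approximating `G` from the left
  set Gseq : ℕ → ℝ → ℝ :=
    fun n s => if 0 < s then ((n : ℝ) + 1) * (Γ s - Γ (s - 1 / ((n : ℝ) + 1))) else 0
    with hGseq_def
  have hGseq_meas : ∀ n, Measurable (Gseq n) := by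
    intro n
    exact Measurable.ite measurableSet_Ioi (by fun_prop) measurable_const
  have hGseq_tendsto : ∀ s, Tendsto (fun n => Gseq n s) atTop (𝓝 (G s)) := by
    intro s
    by_cases hs : 0 < s
    · simp only [hGseq_def, hG_def, if_pos hs]
      have hd := hΓ_deriv s hs
      rw [hasDerivWithinAt_iff_tendsto_slope] at hd
      have hIio : Iio s \ {s} = Iio s := by
        rw [diff_singleton_eq_self]; exact fun h => lt_irrefl s h
      rw [hIio] at hd
      have hy : Tendsto (fun n : ℕ => s - 1 / ((n : ℝ) + 1)) atTop (𝓝[Iio s] s) := by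
        rw [tendsto_nhdsWithin_iff]
        constructor
        · have : Tendsto (fun n : ℕ => 1 / ((n : ℝ) + 1)) atTop (𝓝 0) :=
            tendsto_one_div_add_atTop_nhds_zero_nat
          simpa using (tendsto_const_nhds.sub this)
        · filter_upwards with n
          have : 0 < 1 / ((n : ℝ) + 1) := by positivity
          simp [Set.mem_Iio]; linarith
      have := hd.comp hy
      refine this.congr fun n => ?_
      simp only [Function.comp_def, slope_def_field]
      rw [div_eq_iff (by intro h; nlinarith [h, (by positivity : (0:ℝ) < 1 / ((n : ℝ) + 1))])]
      field_simp
      ring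
    · simp only [hGseq_def, hG_def, if_neg hs]
      exact tendsto_const_nhds
  have hG_meas : Measurable G :=
    measurable_of_tendsto_metrizable hGseq_meas (tendsto_pi_nhds.mpr hGseq_tendsto)
  have hG_nonneg : ∀ s, 0 ≤ G s := by
    intro s
    rw [hG_def]
    dsimp only
    split_ifs with hs
    · have : (0:ℝ) ≤ Γ s := by rw [← hΓ0]; exact hΓ_mono.monotone hs.le
      exact (hg_pos _ this).le
    · exact le_refl 0
  have hGseq_nonneg : ∀ n s, 0 ≤ Gseq n s := by
    intro n s
    rw [hGseq_def]
    dsimp only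
    split_ifs with hs
    · have h1 : Γ (s - 1 / ((n : ℝ) + 1)) ≤ Γ s := by
        apply hΓ_mono.monotone
        have : (0:ℝ) < 1 / ((n : ℝ) + 1) := by positivity
        linarith
      have h2 : (0:ℝ) ≤ (n : ℝ) + 1 := by positivity
      nlinarith
    · exact le_refl 0
  have hGseq_cont : ∀ (n : ℕ) (c : ℝ), 0 ≤ c → IntegrableOn (Gseq n) (Ioo 0 c) volume := by
    intro n c hc
    have hφcont : Continuous fun s => ((n : ℝ) + 1) * (Γ s - Γ (s - 1 / ((n : ℝ) + 1))) := by
      fun_prop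
    apply (hφcont.integrableOn_Ioc.mono_set Ioo_subset_Ioc_self).congr_fun _ measurableSet_Ioo
    intro s hs
    rw [hGseq_def]
    simp only [if_pos hs.1]
  -- a uniform bound on the integrals of the difference quotients
  have hGseq_bound : ∀ (n : ℕ) (c : ℝ), 0 ≤ c →
      ∫ s in Ioo 0 c, Gseq n s ≤ Γ c - Γ (-1) := by
    intro n c hc
    set d : ℝ := 1 / ((n : ℝ) + 1) with hd_def
    have hd_pos : 0 < d := by positivity
    have hd_le : d ≤ 1 := by
      rw [hd_def, div_le_one (by positivity)]
      simp
    have hΓii : ∀ a b : ℝ, IntervalIntegrable Γ volume a b :=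
      fun a b => hΓ_cont.intervalIntegrable a b
    have hΓdii : ∀ a b : ℝ, IntervalIntegrable (fun s => Γ (s - d)) volume a b :=
      fun a b => (hΓ_cont.comp (by continuity)).intervalIntegrable a b
    have hstep : ∫ s in Ioo 0 c, Gseq n s = ∫ s in (0:ℝ)..c, ((n : ℝ) + 1) * (Γ s - Γ (s - d)) := by
      rw [integral_of_le hc, ← integral_Ioc_eq_integral_Ioo]
      apply setIntegral_congr_fun measurableSet_Ioc
      intro s hs
      rw [hGseq_def]
      simp only [if_pos hs.1, hd_def]
    have e1 : ∫ s in (0:ℝ)..c, ((n : ℝ) + 1) * (Γ s - Γ (s - d))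
        = ((n : ℝ) + 1) * ((∫ s in (0:ℝ)..c, Γ s) - ∫ s in (0:ℝ)..c, Γ (s - d)) := by
      rw [intervalIntegral.integral_const_mul, integral_sub (hΓii 0 c) (hΓdii 0 c)]
    rw [hstep, e1]
    have e2 : ∫ s in (0:ℝ)..c, Γ (s - d) = ∫ s in (0 - d)..(c - d), Γ s :=
      integral_comp_sub_right Γ d
    have chasles1 : (∫ s in (0 - d)..(c - d), Γ s) + ∫ s in (c - d)..c, Γ s
        = ∫ s in (0 - d)..c, Γ s := integral_add_adjacent_intervals (hΓii _ _) (hΓii _ _)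
    have chasles2 : (∫ s in (0 - d)..(0:ℝ), Γ s) + ∫ s in (0:ℝ)..c, Γ s
        = ∫ s in (0 - d)..c, Γ s := integral_add_adjacent_intervals (hΓii _ _) (hΓii _ _)
    have bound1 : ∫ s in (c - d)..c, Γ s ≤ d * Γ c := by
      have := intervalIntegral.integral_mono_on (by linarith : c - d ≤ c) (hΓii _ _)
        (intervalIntegrable_const)
        (fun x hx => hΓ_mono.monotone hx.2 : ∀ x ∈ Icc (c - d) c, Γ x ≤ Γ c)
      simpa using this
    have bound2 : d * Γ (-d) ≤ ∫ s in (0 - d)..(0:ℝ), Γ s := by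
      have := intervalIntegral.integral_mono_on (by linarith : 0 - d ≤ 0)
        (intervalIntegrable_const) (hΓii _ _)
        (fun x hx => hΓ_mono.monotone hx.1 : ∀ x ∈ Icc (0 - d) 0, Γ (0 - d) ≤ Γ x)
      simp only [intervalIntegral.integral_const, smul_eq_mul, sub_zero, zero_sub] at this ⊢
      calc d * Γ (-d) = (0 - (0 - d)) * Γ (0 - d) := by ring_nf
        _ ≤ _ := by simpa using this
    have bΓ : Γ (-1) ≤ Γ (-d) := hΓ_mono.monotone (by linarith)
    have hmul : ((n : ℝ) + 1) * d = 1 := by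
      rw [hd_def]; field_simp
    calc ((n : ℝ) + 1) * ((∫ s in (0:ℝ)..c, Γ s) - ∫ s in (0:ℝ)..c, Γ (s - d))
        = ((n : ℝ) + 1) * ((∫ s in (c - d)..c, Γ s) - ∫ s in (0 - d)..(0:ℝ), Γ s) := by
          rw [e2]; congr 1; linarith [chasles1, chasles2]
      _ ≤ ((n : ℝ) + 1) * (d * Γ c - d * Γ (-1)) := by
          apply mul_le_mul_of_nonneg_left _ (by positivity)
          have : d * Γ (-1) ≤ ∫ s in (0 - d)..(0:ℝ), Γ s := by
            calc d * Γ (-1) ≤ d * Γ (-d) := by nlinarith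
              _ ≤ _ := bound2
          linarith
      _ = Γ c - Γ (-1) := by
          have : ((n:ℝ)+1) * (d * Γ c - d * Γ (-1))
              = (((n:ℝ)+1)*d) * Γ c - (((n:ℝ)+1)*d) * Γ (-1) := by ring
          rw [this, hmul]; ring
  -- finiteness of the lintegral of `G`, by Fatou's lemma
  have hbnd : ∀ c : ℝ, 0 ≤ c →
      ∫⁻ s in Ioc 0 c, ENNReal.ofReal (G s) ≤ ENNReal.ofReal (Γ c - Γ (-1)) := by
    intro c hc
    rw [← setLIntegral_congr (Ioo_ae_eq_Ioc (a := (0:ℝ)) (b := c))]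
    have hpt : ∀ s, ENNReal.ofReal (G s)
        = liminf (fun n => ENNReal.ofReal (Gseq n s)) atTop := by
      intro s
      exact (((ENNReal.continuous_ofReal.tendsto _).comp (hGseq_tendsto s))).liminf_eq.symm
    calc ∫⁻ s in Ioo 0 c, ENNReal.ofReal (G s)
        = ∫⁻ s in Ioo 0 c, liminf (fun n => ENNReal.ofReal (Gseq n s)) atTop :=
          lintegral_congr fun s => hpt s
      _ ≤ liminf (fun n => ∫⁻ s in Ioo 0 c, ENNReal.ofReal (Gseq n s)) atTop :=
          lintegral_liminf_le fun n => (hGseq_meas n).ennreal_ofReal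
      _ ≤ ENNReal.ofReal (Γ c - Γ (-1)) := by
          have hle : ∀ n : ℕ, ∫⁻ s in Ioo 0 c, ENNReal.ofReal (Gseq n s)
              ≤ ENNReal.ofReal (Γ c - Γ (-1)) := by
            intro n
            rw [← ofReal_integral_eq_lintegral_ofReal (hGseq_cont n c hc)
              (Eventually.of_forall fun s => hGseq_nonneg n s)]
            exact ENNReal.ofReal_le_ofReal (hGseq_bound n c hc)
          calc liminf (fun n => ∫⁻ s in Ioo 0 c, ENNReal.ofReal (Gseq n s)) atTop
              ≤ liminf (fun _ : ℕ => ENNReal.ofReal (Γ c - Γ (-1))) atTop :=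
                liminf_le_liminf (Eventually.of_forall hle)
            _ = ENNReal.ofReal (Γ c - Γ (-1)) := liminf_const _
  have hG_int : ∀ c : ℝ, 0 ≤ c → IntegrableOn G (Ioc 0 c) volume := by
    intro c hc
    refine ⟨hG_meas.aestronglyMeasurable.restrict, ?_⟩
    rw [hasFiniteIntegral_iff_norm]
    have hnn : ∀ s, ENNReal.ofReal ‖G s‖ = ENNReal.ofReal (G s) := by
      intro s; rw [Real.norm_of_nonneg (hG_nonneg s)]
    calc ∫⁻ s in Ioc 0 c, ENNReal.ofReal ‖G s‖
        = ∫⁻ s in Ioc 0 c, ENNReal.ofReal (G s) := lintegral_congr fun s => hnn s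
      _ ≤ ENNReal.ofReal (Γ c - Γ (-1)) := hbnd c hc
      _ < ⊤ := ENNReal.ofReal_lt_top
  have hG_ii : ∀ c : ℝ, 0 ≤ c → IntervalIntegrable G volume 0 c := by
    intro c hc
    rw [intervalIntegrable_iff_integrableOn_Ioc_of_le hc]
    exact hG_int c hc
  -- the fundamental theorem of calculus for the left derivative, via reflection
  have hFTC : ∀ c : ℝ, 0 ≤ c → ∫ s in (0:ℝ)..c, G s = Γ c := by
    intro c hc
    have hcont : ContinuousOn (fun u : ℝ => -Γ (-u)) (Icc (-c) 0) :=
      ((hΓ_cont.comp continuous_neg).neg).continuousOn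
    have hderiv : ∀ u ∈ Ioo (-c) (0:ℝ),
        HasDerivWithinAt (fun u : ℝ => -Γ (-u)) (G (-u)) (Ioi u) u := by
      intro u hu
      have hs : 0 < -u := by
        rcases hu with ⟨h1, h2⟩; linarith
      have hd := hΓ_deriv (-u) hs
      have hneg : HasDerivWithinAt (fun x : ℝ => -x) (-1) (Ioi u) u :=
        (hasDerivAt_neg u).hasDerivWithinAt
      have hmaps : MapsTo (fun x : ℝ => -x) (Ioi u) (Iio (-u)) := by
        intro x hx
        simp only [mem_Iio, mem_Ioi] at *
        linarith
      have hcomp := HasDerivWithinAt.comp u hd hneg hmaps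
      have := hcomp.neg
      have heq : -(g (Γ (-u)) * -1) = G (-u) := by
        simp only [hG_def]; rw [if_pos hs]; ring
      rw [heq] at this
      exact this
    have hint : IntervalIntegrable (fun u => G (-u)) volume (-c) 0 := by
      have h2 := (IntervalIntegrable.iff_comp_neg (by simp)).mp (hG_ii c hc)
      simpa using h2.symm
    have key := integral_eq_sub_of_hasDeriv_right_of_le (f := fun u => -Γ (-u))
      (f' := fun u => G (-u)) (a := -c) (b := 0) (by linarith) hcont hderiv hint
    have lhs_eq : ∫ u in (-c)..(0:ℝ), G (-u) = ∫ s in (0:ℝ)..c, G s := by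
      rw [integral_comp_neg (a := -c) (b := 0)]
      norm_num
    rw [lhs_eq] at key
    rw [key]
    simp [hΓ0]
  have hFTCset : ∀ c : ℝ, 0 ≤ c → ∫ s in Ioc 0 c, G s = Γ c := by
    intro c hc
    rw [← integral_of_le hc]
    exact hFTC c hc
  -- the main argument: pushing forward the weighted measure under `Γ`
  intro t ht
  have hΓt : 0 ≤ Γ t := by rw [← hΓ0]; exact hΓ_mono.monotone ht
  set μ : Measure ℝ :=
    (volume.restrict (Ioc 0 t)).withDensity (fun s => ENNReal.ofReal (G s)) with hμ_def
  have hlint : ∀ c : ℝ, 0 ≤ c →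
      ∫⁻ s in Ioc 0 c, ENNReal.ofReal (G s) = ENNReal.ofReal (Γ c) := by
    intro c hc
    rw [← ofReal_integral_eq_lintegral_ofReal (hG_int c hc)
      (Eventually.of_forall fun s => hG_nonneg s), hFTCset c hc]
  haveI hμ_fin : IsFiniteMeasure μ := by
    constructor
    rw [hμ_def, withDensity_apply _ MeasurableSet.univ, Measure.restrict_univ]
    rw [hlint t ht]
    exact ENNReal.ofReal_lt_top
  have hmap : Measure.map Γ μ = volume.restrict (Ioc 0 (Γ t)) := by
    haveI : IsFiniteMeasure (Measure.map Γ μ) := by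
      constructor
      rw [Measure.map_apply hΓ_cont.measurable MeasurableSet.univ]
      simp only [preimage_univ]
      exact measure_lt_top μ univ
    apply Measure.ext_of_Iic
    intro x
    rw [Measure.map_apply hΓ_cont.measurable measurableSet_Iic]
    rw [hμ_def, withDensity_apply _ (hΓ_cont.measurable measurableSet_Iic),
      Measure.restrict_restrict (hΓ_cont.measurable measurableSet_Iic)]
    rw [Measure.restrict_apply measurableSet_Iic,
      inter_comm (Iic x) (Ioc 0 (Γ t)), Ioc_inter_Iic]
    rcases lt_or_ge x 0 with hx | hx
    · have hempty : Γ ⁻¹' (Iic x) ∩ Ioc 0 t = ∅ := by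
        ext s
        simp only [mem_inter_iff, mem_preimage, mem_Iic, mem_Ioc, mem_empty_iff_false,
          iff_false, not_and, and_imp]
        intro hΓsx h0s
        exfalso
        have : Γ 0 < Γ s := hΓ_mono h0s
        rw [hΓ0] at this
        linarith
      rw [hempty]
      have hneg : Γ t ⊓ x < 0 := lt_of_le_of_lt inf_le_right hx
      rw [Set.Ioc_eq_empty (by simp only [not_lt]; exact hneg.le)]
      simp
    · set x' := Γ t ⊓ x with hx'_def
      have hx'0 : 0 ≤ x' := le_inf hΓt hx
      have hx'le : x' ≤ Γ t := inf_le_left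
      have hIVT : x' ∈ Γ '' Icc 0 t := by
        apply intermediate_value_Icc ht hΓ_cont.continuousOn
        rw [hΓ0]
        exact ⟨hx'0, hx'le⟩
      obtain ⟨c, hc_mem, hc⟩ := hIVT
      have hset : Γ ⁻¹' (Iic x) ∩ Ioc 0 t = Ioc 0 c := by
        ext s
        simp only [mem_inter_iff, mem_preimage, mem_Iic, mem_Ioc]
        constructor
        · rintro ⟨hΓsx, h0s, hst⟩
          refine ⟨h0s, ?_⟩
          rw [← hΓ_mono.le_iff_le, hc]
          exact le_inf (hΓ_mono.monotone hst) hΓsx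
        · rintro ⟨h0s, hsc⟩
          have hsx : Γ s ≤ Γ c := hΓ_mono.monotone hsc
          rw [hc] at hsx
          exact ⟨le_trans hsx inf_le_right, h0s, le_trans hsc hc_mem.2⟩
      rw [hset, hlint c hc_mem.1, Real.volume_Ioc, ← hc]
      simp
  -- final computation
  rw [integral_of_le hΓt, integral_of_le ht]
  have hφm : AEStronglyMeasurable (fun s => h s * lam s) (Measure.map Γ μ) := by
    rw [hmap]
    exact (hh_meas.aestronglyMeasurable.mul hlam_loc.aestronglyMeasurable).restrict
  calc ∫ s in Ioc 0 (Γ t), h s * lam s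
      = ∫ s, h s * lam s ∂(Measure.map Γ μ) := by rw [hmap]
    _ = ∫ s, h (Γ s) * lam (Γ s) ∂μ := integral_map hΓ_cont.measurable.aemeasurable hφm
    _ = ∫ s in Ioc 0 t, (Real.toNNReal (G s) : ℝ) • (h (Γ s) * lam (Γ s)) ∂volume := by
        rw [hμ_def]
        have : (fun s => ENNReal.ofReal (G s))
            = fun s => ((Real.toNNReal (G s) : ℝ≥0) : ℝ≥0∞) := rfl
        rw [this, integral_withDensity_eq_integral_smul hG_meas.real_toNNReal]
        simp only [NNReal.smul_def, smul_eq_mul]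
    _ = ∫ s in Ioc 0 t, h (Γ s) * lam (Γ s) * g (Γ s) := by
        apply setIntegral_congr_fun measurableSet_Ioc
        intro s hs
        have hGs : G s = g (Γ s) := by simp only [hG_def]; rw [if_pos hs.1]
        dsimp only
        rw [smul_eq_mul, Real.coe_toNNReal _ (hG_nonneg s), hGs]
        ring
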